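/- Let n >= 1 and A a subset of A_{2n}. Then A is balanced if and only if for every a in S^{2n-1}, the family {U(a) : U in A} is a finite unit tight frame for the tangent space T_a S^{2n-1}. -/

import Mathlib

open Finset RealInnerProductSpace

/-- The admissibility condition defining the set `A_{2n}`. -/
def Adm (n : ℕ) (U : (Fin (2*n) → ℤˣ) × (Fin (2*n) → Fin (2*n))) : Prop :=
  (∀ i, U.1 i = - U.1 (U.2 i)) ∧ (∀ i, U.2 (U.2 i) = i)

/-- A subset `A ⊆ A_{2n}` is balanced. -/
def IsBalanced (n : ℕ) (A : Finset ((Fin (2*n) → ℤˣ) × (Fin (2*n) → Fin (2*n)))) : Prop :=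
  (∀ p q : Fin (2*n), p ≠ q →
    ((A.filter (fun U => U.2 p = q)).card : ℝ) = A.card / (2*(n:ℝ) - 1)) ∧
  (∀ p q r s : Fin (2*n), p ≠ q → p ≠ r → p ≠ s → q ≠ r → q ≠ s → r ≠ s →
    (A.filter (fun U => U.1 p * U.1 q = -1 ∧
        (U.2 r = p ∧ U.2 s = q ∨ U.2 r = q ∧ U.2 s = p))).card =
    (A.filter (fun U => U.1 p * U.1 q = 1 ∧
        (U.2 r = p ∧ U.2 s = q ∨ U.2 r = q ∧ U.2 s = p))).card)

/-- The operator `U_{(ε,k)} : ℝ^{2n} → ℝ^{2n}`, `a ↦ (ε_{k_i} a_{k_i})_i`. -/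
def Uact (n : ℕ) (U : (Fin (2*n) → ℤˣ) × (Fin (2*n) → Fin (2*n)))
    (a : EuclideanSpace ℝ (Fin (2*n))) : EuclideanSpace ℝ (Fin (2*n)) :=
  WithLp.toLp 2 (fun i => ((U.1 (U.2 i) : ℤ) : ℝ) * a (U.2 i))


noncomputable def sg (u : ℤˣ) : ℝ := ((u : ℤ) : ℝ)

lemma sg_mul_self (u : ℤˣ) : sg u * sg u = 1 := by
  rcases Int.units_eq_one_or u with h | h <;> simp [sg, h]

lemma sg_neg (u : ℤˣ) : sg (-u) = - sg u := by simp [sg]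

section adm
variable {n : ℕ} {U : (Fin (2*n) → ℤˣ) × (Fin (2*n) → Fin (2*n))}

lemma k_inj (hU : Adm n U) {i j : Fin (2*n)} (h : U.2 i = U.2 j) : i = j := by
  have := congrArg U.2 h; rwa [hU.2, hU.2] at this

lemma k_ne (hU : Adm n U) (i : Fin (2*n)) : U.2 i ≠ i := by
  intro h
  have h1 := hU.1 i
  rw [h] at h1
  have h2 : (U.1 i : ℤ) = ((- U.1 i : ℤˣ) : ℤ) := congrArg Units.val h1
  have h3 : (U.1 i : ℤ) ≠ 0 := Units.ne_zero _
  simp at h2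
  omega

lemma k_eq_iff (hU : Adm n U) {i j : Fin (2*n)} : U.2 i = j ↔ U.2 j = i := by
  constructor <;> intro h <;> rw [← h, hU.2]

lemma sg_k (hU : Adm n U) (i : Fin (2*n)) : sg (U.1 (U.2 i)) * sg (U.1 i) = -1 := by
  rw [hU.1 i, sg_neg]
  rw [mul_neg, sg_mul_self]

end adm

lemma Uact_apply (n : ℕ) (U : (Fin (2*n) → ℤˣ) × (Fin (2*n) → Fin (2*n)))
    (a : EuclideanSpace ℝ (Fin (2*n))) (i : Fin (2*n)) :
    Uact n U a i = sg (U.1 (U.2 i)) * a (U.2 i) := rfl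

lemma inner_eq {m : ℕ} (x y : EuclideanSpace ℝ (Fin m)) : ⟪x, y⟫ = ∑ i, x i * y i := by
  simp [PiLp.inner_apply, RCLike.inner_apply, mul_comm]

lemma norm_eq' {m : ℕ} (x : EuclideanSpace ℝ (Fin m)) : ‖x‖ = Real.sqrt (∑ i, (x i)^2) := by
  rw [EuclideanSpace.norm_eq]; congr 1
  refine Finset.sum_congr rfl fun i _ => by simp [Real.norm_eq_abs, sq_abs]

lemma sum_sg_card {m : ℕ} (B : Finset ((Fin m → ℤˣ) × (Fin m → Fin m))) (p q : Fin m) :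
    ∑ U ∈ B, sg (U.1 p) * sg (U.1 q) =
      ((B.filter fun U => U.1 p * U.1 q = 1).card : ℝ)
        - ((B.filter fun U => U.1 p * U.1 q = -1).card : ℝ) := by
  have key : ∀ U : (Fin m → ℤˣ) × (Fin m → Fin m),
      sg (U.1 p) * sg (U.1 q) = if U.1 p * U.1 q = 1 then (1:ℝ) else -1 := by
    intro U
    have h0 : sg (U.1 p) * sg (U.1 q) = ((((U.1 p * U.1 q : ℤˣ)) : ℤ) : ℝ) := by
      simp [sg]
    rcases Int.units_eq_one_or (U.1 p * U.1 q) with h | h <;> simp [h0, h]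
  rw [Finset.sum_congr rfl fun U _ => key U,
    ← Finset.sum_filter_add_sum_filter_not B (fun U => U.1 p * U.1 q = 1)]
  have h1 : ∑ U ∈ B.filter (fun U => U.1 p * U.1 q = 1),
      (if U.1 p * U.1 q = 1 then (1:ℝ) else -1) =
      ((B.filter fun U => U.1 p * U.1 q = 1).card : ℝ) := by
    rw [Finset.sum_congr rfl (fun U hU => by rw [if_pos (Finset.mem_filter.mp hU).2])]
    simp
  have h2 : B.filter (fun U => ¬ U.1 p * U.1 q = 1) = B.filter (fun U => U.1 p * U.1 q = -1) := by
    refine Finset.filter_congr fun U _ => ?_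
    constructor
    · intro h; rcases Int.units_eq_one_or (U.1 p * U.1 q) with h' | h' <;> simp_all
    · intro h; rw [h]; decide
  have h3 : ∑ U ∈ B.filter (fun U => ¬ U.1 p * U.1 q = 1),
      (if U.1 p * U.1 q = 1 then (1:ℝ) else -1) =
      - ((B.filter fun U => U.1 p * U.1 q = -1).card : ℝ) := by
    rw [h2, Finset.sum_congr rfl (fun U hU => by
      rw [if_neg]
      have := (Finset.mem_filter.mp hU).2
      rw [this]; decide)]
    simp
  rw [h1, h3]; ring

lemma sum_sq_reindex {n : ℕ} {U : (Fin (2*n) → ℤˣ) × (Fin (2*n) → Fin (2*n))}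
    (hU : Adm n U) (a : EuclideanSpace ℝ (Fin (2*n))) :
    ∑ i, (a (U.2 i))^2 = ∑ i, (a i)^2 := by
  have hinv : Function.Involutive U.2 := hU.2
  exact (Fintype.sum_equiv hinv.toPerm _ _ (fun i => by
    show a i ^ 2 = a (U.2 (U.2 i)) ^ 2
    rw [hU.2 i])).symm

lemma norm_Uact {n : ℕ} {U : (Fin (2*n) → ℤˣ) × (Fin (2*n) → Fin (2*n))}
    (hU : Adm n U) (a : EuclideanSpace ℝ (Fin (2*n))) (ha : ‖a‖ = 1) :
    ‖Uact n U a‖ = 1 := by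
  rw [norm_eq']
  have h1 : ∀ i, (Uact n U a i)^2 = (a (U.2 i))^2 := by
    intro i
    rw [Uact_apply, mul_pow, sq, sg_mul_self, one_mul]
  rw [Finset.sum_congr rfl fun i _ => h1 i, sum_sq_reindex hU a]
  have h2 : ∑ i, (a i)^2 = 1 := by
    have := norm_eq' a
    rw [ha] at this
    have h3 : (0:ℝ) ≤ ∑ i, (a i)^2 := Finset.sum_nonneg fun i _ => sq_nonneg _
    nlinarith [Real.sq_sqrt h3]
  rw [h2, Real.sqrt_one]

lemma inner_Uact {n : ℕ} {U : (Fin (2*n) → ℤˣ) × (Fin (2*n) → Fin (2*n))}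
    (hU : Adm n U) (a : EuclideanSpace ℝ (Fin (2*n))) :
    ⟪Uact n U a, a⟫ = 0 := by
  rw [inner_eq]
  have hinv : Function.Involutive U.2 := hU.2
  have hrev : ∑ i, Uact n U a i * a i = ∑ i, Uact n U a (U.2 i) * a (U.2 i) :=
    Fintype.sum_equiv hinv.toPerm _ _ (fun i => by
      show _ = Uact n U a (U.2 (U.2 i)) * a (U.2 (U.2 i))
      rw [hU.2 i])
  have hterm : ∀ i, Uact n U a (U.2 i) * a (U.2 i) = - (Uact n U a i * a i) := by
    intro i
    rw [Uact_apply, Uact_apply, hU.2 i]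
    rw [hU.1 i, sg_neg]
    ring
  have : ∑ i, Uact n U a i * a i = - ∑ i, Uact n U a i * a i := by
    conv_lhs => rw [hrev]
    rw [Finset.sum_congr rfl fun i _ => hterm i, Finset.sum_neg_distrib]
  linarith

lemma fiber_empty {n : ℕ} {A : Finset ((Fin (2*n) → ℤˣ) × (Fin (2*n) → Fin (2*n)))}
    (hA : ∀ U ∈ A, Adm n U) {i j p q : Fin (2*n)} (hij : i ≠ j)
    (h : p = q ∨ p = i ∨ p = j ∨ q = i ∨ q = j) (hne : ¬ (p = j ∧ q = i)) :
    A.filter (fun U => U.2 i = p ∧ U.2 j = q) = ∅ := by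
  rw [Finset.filter_eq_empty_iff]
  rintro U hU ⟨e1, e2⟩
  have hadm := hA U hU
  rcases h with h | h | h | h | h
  · exact hij (k_inj hadm (e1.trans (h ▸ e2.symm)))
  · exact k_ne hadm i (h ▸ e1)
  · have h2 : U.2 p = i := by rw [← e1, hadm.2]
    exact hne ⟨h, e2.symm.trans (h ▸ h2)⟩
  · have h2 : U.2 q = j := by rw [← e2, hadm.2]
    exact hne ⟨e1.symm.trans (h ▸ h2), h⟩
  · exact k_ne hadm j (h ▸ e2)

lemma Tlem {n : ℕ} {A : Finset ((Fin (2*n) → ℤˣ) × (Fin (2*n) → Fin (2*n)))}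
    (hA : ∀ U ∈ A, Adm n U) (hbal : IsBalanced n A)
    (a : EuclideanSpace ℝ (Fin (2*n))) (ha : ∑ i, (a i)^2 = 1) (i j : Fin (2*n)) :
    ∑ U ∈ A, Uact n U a i * Uact n U a j =
      ((A.card : ℝ) / (2*(n:ℝ) - 1)) * ((if i = j then 1 else 0) - a i * a j) := by
  set C : ℝ := (A.card : ℝ) / (2*(n:ℝ) - 1) with hC
  by_cases hij : i = j
  · -- diagonal case
    subst hij
    have h1 : ∀ U ∈ A, Uact n U a i * Uact n U a i = (a (U.2 i))^2 := by
      intro U _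
      rw [Uact_apply, sq, mul_mul_mul_comm, sg_mul_self, one_mul]
    rw [Finset.sum_congr rfl h1]
    rw [← Finset.sum_fiberwise_of_maps_to (g := fun U => U.2 i) (t := univ)
      (fun _ _ => mem_univ _)
      (fun (U : (Fin (2*n) → ℤˣ) × (Fin (2*n) → Fin (2*n))) => (a (U.2 i))^2)]
    have h2 : ∀ q : Fin (2*n), ∑ U ∈ A.filter (fun U => U.2 i = q), (a (U.2 i))^2
        = ((A.filter (fun U => U.2 i = q)).card : ℝ) * (a q)^2 := by
      intro q
      rw [Finset.sum_congr rfl (fun U hU => by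
        rw [(Finset.mem_filter.mp hU).2])]
      rw [Finset.sum_const, nsmul_eq_mul]
    rw [Finset.sum_congr rfl (fun q _ => h2 q)]
    rw [← Finset.sum_erase_add _ _ (mem_univ i)]
    have h3 : (A.filter (fun U => U.2 i = i)) = ∅ := by
      rw [Finset.filter_eq_empty_iff]
      exact fun U hU => k_ne (hA U hU) i
    rw [h3]
    have h4 : ∀ q ∈ univ.erase i, ((A.filter (fun U => U.2 i = q)).card : ℝ) * (a q)^2
        = C * (a q)^2 := by
      intro q hq
      rw [hbal.1 i q (Ne.symm (Finset.mem_erase.mp hq).1)]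
    rw [Finset.sum_congr rfl h4, ← Finset.mul_sum]
    have h5 : ∑ q ∈ univ.erase i, (a q)^2 = 1 - (a i)^2 := by
      have h6 : ∑ q ∈ univ.erase i, (a q)^2 + (a i)^2 = 1 := by
        rw [Finset.sum_erase_add univ _ (mem_univ i)]; exact ha
      linarith
    rw [h5]
    simp [sq]
  · -- off-diagonal case
    have key : ∀ p q : Fin (2*n),
        (∑ U ∈ A.filter (fun U => U.2 i = p ∧ U.2 j = q), sg (U.1 p) * sg (U.1 q)) +
        (∑ U ∈ A.filter (fun U => U.2 i = q ∧ U.2 j = p), sg (U.1 q) * sg (U.1 p)) =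
        (if (p, q) = (j, i) then -C else 0) + (if (p, q) = (i, j) then -C else 0) := by
      intro p q
      by_cases h1 : p = j ∧ q = i
      · rw [h1.1, h1.2]
        have e1 : A.filter (fun U => U.2 i = j ∧ U.2 j = i) = A.filter (fun U => U.2 i = j) := by
          refine Finset.filter_congr fun U hU => ?_
          have hadm := hA U hU
          exact ⟨fun h => h.1, fun h => ⟨h, (k_eq_iff hadm).mp h⟩⟩
        have e2 : A.filter (fun U => U.2 i = i ∧ U.2 j = j) = ∅ :=
          fiber_empty hA hij (Or.inr (Or.inl rfl)) (fun h => hij h.1)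
        rw [e1, e2]
        have e3 : ∀ U ∈ A.filter (fun U => U.2 i = j), sg (U.1 j) * sg (U.1 i) = -1 := by
          intro U hU
          obtain ⟨hUA, hk⟩ := Finset.mem_filter.mp hU
          have := sg_k (hA U hUA) i
          rwa [hk] at this
        rw [Finset.sum_congr rfl e3, Finset.sum_const, Finset.sum_empty, nsmul_eq_mul,
          hbal.1 i j hij]
        have c2 : ¬ (((j : Fin (2*n)), i) = ((i : Fin (2*n)), j)) := by
          simp only [Prod.mk.injEq]
          exact fun h => hij h.1.symm
        rw [if_pos rfl, if_neg c2]
        simp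
        exact hC.symm
      · by_cases h2 : p = i ∧ q = j
        · rw [h2.1, h2.2]
          have e1 : A.filter (fun U => U.2 i = i ∧ U.2 j = j) = ∅ :=
            fiber_empty hA hij (Or.inr (Or.inl rfl)) (fun h => hij h.1)
          have e2 : A.filter (fun U => U.2 i = j ∧ U.2 j = i) = A.filter (fun U => U.2 i = j) := by
            refine Finset.filter_congr fun U hU => ?_
            have hadm := hA U hU
            exact ⟨fun h => h.1, fun h => ⟨h, (k_eq_iff hadm).mp h⟩⟩
          have e3 : ∀ U ∈ A.filter (fun U => U.2 i = j), sg (U.1 j) * sg (U.1 i) = -1 := by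
            intro U hU
            obtain ⟨hUA, hk⟩ := Finset.mem_filter.mp hU
            have := sg_k (hA U hUA) i
            rwa [hk] at this
          rw [e1, e2, Finset.sum_congr rfl e3, Finset.sum_const, Finset.sum_empty, nsmul_eq_mul,
            hbal.1 i j hij]
          have c1 : ¬ (((i : Fin (2*n)), j) = ((j : Fin (2*n)), i)) := by
            simp only [Prod.mk.injEq]
            exact fun h => hij h.1
          rw [if_neg c1, if_pos rfl]
          simp
          exact hC.symm
        · -- neither special pair
          have c1 : ¬ ((p, q) = ((j : Fin (2*n)), i)) := by
            simp only [Prod.mk.injEq]; exact h1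
          have c2 : ¬ ((p, q) = ((i : Fin (2*n)), j)) := by
            simp only [Prod.mk.injEq]; exact h2
          rw [if_neg c1, if_neg c2]
          by_cases hd : p ≠ q ∧ p ≠ i ∧ p ≠ j ∧ q ≠ i ∧ q ≠ j
          · obtain ⟨hd1, hd2, hd3, hd4, hd5⟩ := hd
            have hcomm : ∀ U ∈ A.filter (fun U => U.2 i = q ∧ U.2 j = p),
                sg (U.1 q) * sg (U.1 p) = sg (U.1 p) * sg (U.1 q) := fun U _ => mul_comm _ _
            rw [Finset.sum_congr rfl hcomm]
            have hdisj : Disjoint (A.filter (fun U => U.2 i = p ∧ U.2 j = q))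
                (A.filter (fun U => U.2 i = q ∧ U.2 j = p)) := by
              refine Finset.disjoint_left.mpr ?_
              intro U hx hx'
              have cc1 := (Finset.mem_filter.mp hx).2.1
              have cc2 := (Finset.mem_filter.mp hx').2.1
              exact hd1 (cc1.symm.trans cc2)
            rw [← Finset.sum_union hdisj, ← Finset.filter_or, sum_sg_card]
            have hcards := hbal.2 p q i j hd1 hd2 hd3 hd4 hd5 hij
            have hf1 : ((A.filter (fun U => U.2 i = p ∧ U.2 j = q ∨ U.2 i = q ∧ U.2 j = p)).filter
                (fun U => U.1 p * U.1 q = 1)) =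
                A.filter (fun U => U.1 p * U.1 q = 1 ∧
                  (U.2 i = p ∧ U.2 j = q ∨ U.2 i = q ∧ U.2 j = p)) := by
              rw [Finset.filter_filter]
              exact Finset.filter_congr fun U _ => and_comm
            have hf2 : ((A.filter (fun U => U.2 i = p ∧ U.2 j = q ∨ U.2 i = q ∧ U.2 j = p)).filter
                (fun U => U.1 p * U.1 q = -1)) =
                A.filter (fun U => U.1 p * U.1 q = -1 ∧
                  (U.2 i = p ∧ U.2 j = q ∨ U.2 i = q ∧ U.2 j = p)) := by
              rw [Finset.filter_filter]
              exact Finset.filter_congr fun U _ => and_comm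
            rw [hf1, hf2, hcards]
            ring
          · push_neg at hd
            have hcases : p = q ∨ p = i ∨ p = j ∨ q = i ∨ q = j := by
              by_cases cc1 : p = q
              · exact Or.inl cc1
              · by_cases cc2 : p = i
                · exact Or.inr (Or.inl cc2)
                · by_cases cc3 : p = j
                  · exact Or.inr (Or.inr (Or.inl cc3))
                  · by_cases cc4 : q = i
                    · exact Or.inr (Or.inr (Or.inr (Or.inl cc4)))
                    · exact Or.inr (Or.inr (Or.inr (Or.inr (hd cc1 cc2 cc3 cc4))))
            have e1 : A.filter (fun U => U.2 i = p ∧ U.2 j = q) = ∅ :=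
              fiber_empty hA hij hcases h1
            have e2 : A.filter (fun U => U.2 i = q ∧ U.2 j = p) = ∅ :=
              fiber_empty hA hij (by tauto) (fun h => h2 ⟨h.2, h.1⟩)
            rw [e1, e2]
            simp
    -- now assemble
    have step1 : ∑ U ∈ A, Uact n U a i * Uact n U a j =
        ∑ pq : Fin (2*n) × Fin (2*n), a pq.1 * a pq.2 *
          ∑ U ∈ A.filter (fun U => U.2 i = pq.1 ∧ U.2 j = pq.2), sg (U.1 pq.1) * sg (U.1 pq.2) := by
      rw [← Finset.sum_fiberwise_of_maps_to (g := fun U => (U.2 i, U.2 j))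
        (t := (univ : Finset (Fin (2*n) × Fin (2*n)))) (fun _ _ => mem_univ _)
        (fun (U : (Fin (2*n) → ℤˣ) × (Fin (2*n) → Fin (2*n))) => Uact n U a i * Uact n U a j)]
      refine Finset.sum_congr rfl fun pq _ => ?_
      have hfe : A.filter (fun U => (U.2 i, U.2 j) = pq) =
          A.filter (fun U => U.2 i = pq.1 ∧ U.2 j = pq.2) := by
        refine Finset.filter_congr fun U _ => ?_
        rw [Prod.ext_iff]
      rw [hfe, Finset.mul_sum]
      refine Finset.sum_congr rfl fun U hU => ?_
      obtain ⟨_, hk1, hk2⟩ := Finset.mem_filter.mp hU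
      rw [Uact_apply, Uact_apply, hk1, hk2]
      ring
    have swap_eq : (∑ pq : Fin (2*n) × Fin (2*n), a pq.1 * a pq.2 *
          ∑ U ∈ A.filter (fun U => U.2 i = pq.1 ∧ U.2 j = pq.2), sg (U.1 pq.1) * sg (U.1 pq.2)) =
        ∑ pq : Fin (2*n) × Fin (2*n), a pq.1 * a pq.2 *
          ∑ U ∈ A.filter (fun U => U.2 i = pq.2 ∧ U.2 j = pq.1), sg (U.1 pq.2) * sg (U.1 pq.1) := by
      refine Fintype.sum_equiv (Equiv.prodComm _ _) _ _ fun pq => ?_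
      simp only [Equiv.prodComm_apply, Prod.fst_swap, Prod.snd_swap]
      rw [mul_comm (a pq.2) (a pq.1)]
      rfl
    have twice : (2:ℝ) * (∑ U ∈ A, Uact n U a i * Uact n U a j) =
        ∑ pq : Fin (2*n) × Fin (2*n), ((if pq = (j, i) then a pq.1 * a pq.2 * (-C) else 0) +
          (if pq = (i, j) then a pq.1 * a pq.2 * (-C) else 0)) := by
      rw [two_mul, step1]
      nth_rewrite 2 [swap_eq]
      rw [← Finset.sum_add_distrib]
      refine Finset.sum_congr rfl fun pq _ => ?_
      rw [← mul_add, key pq.1 pq.2]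
      by_cases hc1 : pq = (j, i)
      · have hc2 : ¬ pq = ((i : Fin (2*n)), j) := by
          rw [hc1]
          simp only [Prod.mk.injEq]
          exact fun h => hij h.1.symm
        have hc1' : ((pq.1, pq.2) = ((j : Fin (2*n)), i)) := by rw [Prod.mk.eta]; exact hc1
        have hc2' : ¬ ((pq.1, pq.2) = ((i : Fin (2*n)), j)) := by rw [Prod.mk.eta]; exact hc2
        rw [if_pos hc1', if_neg hc2', if_pos hc1, if_neg hc2]
        try ring
      · by_cases hc2 : pq = (i, j)
        · have hc1' : ¬ ((pq.1, pq.2) = ((j : Fin (2*n)), i)) := by rw [Prod.mk.eta]; exact hc1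
          have hc2' : ((pq.1, pq.2) = ((i : Fin (2*n)), j)) := by rw [Prod.mk.eta]; exact hc2
          rw [if_neg hc1', if_pos hc2', if_neg hc1, if_pos hc2]
          try ring
        · have hc1' : ¬ ((pq.1, pq.2) = ((j : Fin (2*n)), i)) := by rw [Prod.mk.eta]; exact hc1
          have hc2' : ¬ ((pq.1, pq.2) = ((i : Fin (2*n)), j)) := by rw [Prod.mk.eta]; exact hc2
          rw [if_neg hc1', if_neg hc2', if_neg hc1, if_neg hc2]
          try ring
    rw [Finset.sum_add_distrib, Finset.sum_ite_eq' univ ((j : Fin (2*n)), i)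
      (fun pq => a pq.1 * a pq.2 * (-C)), Finset.sum_ite_eq' univ ((i : Fin (2*n)), j)
      (fun pq => a pq.1 * a pq.2 * (-C))] at twice
    simp only [mem_univ, if_true] at twice
    rw [if_neg hij]
    ring_nf
    ring_nf at twice
    linarith

lemma inner_single_left' {m : ℕ} (p : Fin m) (v : EuclideanSpace ℝ (Fin m)) :
    ⟪EuclideanSpace.single p (1:ℝ), v⟫ = v p := by
  rw [inner_eq]
  have h1 : ∀ i : Fin m, EuclideanSpace.single p (1:ℝ) i * v i = if i = p then v i else 0 := by
    intro i
    by_cases h : i = p <;> simp [EuclideanSpace.single_apply, h]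
  rw [Finset.sum_congr rfl fun i _ => h1 i, Finset.sum_ite_eq' univ p v]
  simp

theorem balanced_iff_moving_funtf (n : ℕ) (hn : 1 ≤ n)
    (A : Finset ((Fin (2*n) → ℤˣ) × (Fin (2*n) → Fin (2*n))))
    (hA : ∀ U ∈ A, Adm n U) (hA0 : A.Nonempty) :
    IsBalanced n A ↔
    (∀ a : EuclideanSpace ℝ (Fin (2*n)), ‖a‖ = 1 →
      (∀ U ∈ A, ‖Uact n U a‖ = 1 ∧ ⟪Uact n U a, a⟫ = 0) ∧
      (∃ C : ℝ, C > 0 ∧ ∀ x : EuclideanSpace ℝ (Fin (2*n)), ⟪x, a⟫ = 0 →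
        x = C⁻¹ • ∑ U ∈ A, ⟪x, Uact n U a⟫ • Uact n U a)) := by
  have hn1 : (1:ℝ) ≤ (n:ℝ) := by exact_mod_cast hn
  have hden : (0:ℝ) < 2*(n:ℝ) - 1 := by linarith
  constructor
  · -- forward
    intro hbal a hna
    have ha : ∑ i, (a i)^2 = 1 := by
      have h0 : (0:ℝ) ≤ ∑ i, (a i)^2 := Finset.sum_nonneg fun i _ => sq_nonneg _
      have := norm_eq' a
      rw [hna] at this
      nlinarith [Real.sq_sqrt h0]
    refine ⟨fun U hU => ⟨norm_Uact (hA U hU) a hna, inner_Uact (hA U hU) a⟩, ?_⟩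
    set C : ℝ := (A.card : ℝ) / (2*(n:ℝ) - 1) with hCdef
    have hC0 : 0 < C := by
      apply div_pos _ hden
      exact_mod_cast Finset.card_pos.mpr hA0
    refine ⟨C, hC0, ?_⟩
    intro x hx
    have hx' : ∑ i, x i * a i = 0 := by rw [inner_eq] at hx; exact hx
    ext j
    have hkey : ∑ U ∈ A, ⟪x, Uact n U a⟫ * Uact n U a j = C * x j := by
      have h1 : ∀ U ∈ A, ⟪x, Uact n U a⟫ * Uact n U a j
          = ∑ i, x i * (Uact n U a i * Uact n U a j) := by
        intro U _
        rw [inner_eq, Finset.sum_mul]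
        exact Finset.sum_congr rfl fun i _ => by ring
      rw [Finset.sum_congr rfl h1, Finset.sum_comm]
      have h2 : ∀ i, ∑ U ∈ A, x i * (Uact n U a i * Uact n U a j)
          = x i * (C * ((if i = j then 1 else 0) - a i * a j)) := by
        intro i
        rw [← Finset.mul_sum, Tlem hA hbal a ha i j]
      rw [Finset.sum_congr rfl (fun i _ => h2 i)]
      have h3 : ∀ i : Fin (2*n), x i * (C * ((if i = j then 1 else 0) - a i * a j))
          = (if i = j then C * x i else 0) - (C * a j) * (x i * a i) := by
        intro i
        by_cases h : i = j <;> simp [h] <;> ring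
      rw [Finset.sum_congr rfl (fun i _ => h3 i), Finset.sum_sub_distrib,
        Finset.sum_ite_eq' univ j (fun i => C * x i), ← Finset.mul_sum, hx']
      simp
    have happ : (C⁻¹ • ∑ U ∈ A, ⟪x, Uact n U a⟫ • Uact n U a) j
        = C⁻¹ * ∑ U ∈ A, ⟪x, Uact n U a⟫ * Uact n U a j := by
      show C⁻¹ * ((∑ U ∈ A, ⟪x, Uact n U a⟫ • Uact n U a) j) = _
      congr 1
      rw [WithLp.ofLp_sum, Finset.sum_apply]
      rfl
    rw [happ, hkey, ← mul_assoc, inv_mul_cancel₀ (ne_of_gt hC0), one_mul]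
  · -- reverse
    intro h
    constructor
    · -- condition (i)
      intro p q hpq
      have hna : ‖EuclideanSpace.single q (1:ℝ)‖ = 1 := by
        simp [EuclideanSpace.norm_single]
      set a : EuclideanSpace ℝ (Fin (2*n)) := EuclideanSpace.single q (1:ℝ) with ha_def
      obtain ⟨C, hC0, hfr⟩ := (h a hna).2
      have claim1 : ∀ p' : Fin (2*n), p' ≠ q →
          ((A.filter fun U => U.2 p' = q).card : ℝ) = C := by
        intro p' hp'
        have hx : ⟪(EuclideanSpace.single p' (1:ℝ)), a⟫ = 0 := by
          rw [inner_single_left', ha_def, EuclideanSpace.single_apply, if_neg hp']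
        have heq := congrFun (congrArg WithLp.ofLp (hfr _ hx)) p'
        have hL : (EuclideanSpace.single p' (1:ℝ)) p' = 1 := by
          simp [EuclideanSpace.single_apply]
        have hterm : ∀ U ∈ A, ⟪(EuclideanSpace.single p' (1:ℝ)), Uact n U a⟫ * Uact n U a p'
            = (if U.2 p' = q then (1:ℝ) else 0) := by
          intro U _
          rw [inner_single_left', Uact_apply, ha_def]
          by_cases hk : U.2 p' = q
          · rw [hk, if_pos rfl, EuclideanSpace.single_apply, if_pos rfl, mul_one]
            exact sg_mul_self _
          · rw [if_neg hk, EuclideanSpace.single_apply, if_neg hk, mul_zero, zero_mul]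
        have happ : (C⁻¹ • ∑ U ∈ A, ⟪(EuclideanSpace.single p' (1:ℝ)), Uact n U a⟫ • Uact n U a) p'
            = C⁻¹ * ∑ U ∈ A, ⟪(EuclideanSpace.single p' (1:ℝ)), Uact n U a⟫ * Uact n U a p' := by
          show C⁻¹ * ((∑ U ∈ A, _ • Uact n U a) p') = _
          congr 1
          rw [WithLp.ofLp_sum, Finset.sum_apply]
          rfl
        rw [happ, hL, Finset.sum_congr rfl hterm, Finset.sum_boole] at heq
        have hCne : C ≠ 0 := ne_of_gt hC0
        field_simp at heq
        exact heq.symm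
      have claim2 : (A.card : ℝ) = (2*(n:ℝ) - 1) * C := by
        have hpart : A.card = ∑ p' ∈ univ.erase q, (A.filter fun U => U.2 q = p').card :=
          Finset.card_eq_sum_card_fiberwise
            (fun U hU => Finset.mem_erase.mpr ⟨k_ne (hA U hU) q, mem_univ _⟩)
        have hflip : ∀ p' ∈ univ.erase q, ((A.filter fun U => U.2 q = p').card : ℝ) = C := by
          intro p' hp'
          have he : A.filter (fun U => U.2 q = p') = A.filter (fun U => U.2 p' = q) :=
            Finset.filter_congr fun U hU => k_eq_iff (hA U hU)
          rw [he]
          exact claim1 p' (Finset.mem_erase.mp hp').1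
        have hcast : (A.card : ℝ) = ∑ p' ∈ univ.erase q, ((A.filter fun U => U.2 q = p').card : ℝ) := by
          rw [hpart]
          push_cast
          rfl
        rw [hcast, Finset.sum_congr rfl hflip, Finset.sum_const, nsmul_eq_mul]
        congr 1
        rw [Finset.card_erase_of_mem (mem_univ q), Finset.card_univ, Fintype.card_fin]
        have h2n : 1 ≤ 2*n := by omega
        push_cast [h2n]
        ring
      rw [claim1 p hpq, claim2]
      field_simp
    · -- condition (ii)
      intro p q r s hpq hpr hps hqr hqs hrs
      set c : ℝ := (Real.sqrt 2)⁻¹ with hcdef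
      have hc2 : c * c = 1/2 := by
        rw [hcdef, ← mul_inv, Real.mul_self_sqrt (by norm_num)]
        norm_num
      set a : EuclideanSpace ℝ (Fin (2*n)) :=
        (WithLp.equiv 2 (Fin (2*n) → ℝ)).symm (fun i => if i = p ∨ i = q then c else 0) with ha_def
      have hav : ∀ i, a i = if i = p ∨ i = q then c else 0 := fun i => rfl
      have hna : ‖a‖ = 1 := by
        rw [norm_eq']
        have h1 : ∀ i : Fin (2*n), (a i)^2 =
            (if i = p then 1/2 else 0) + (if i = q then 1/2 else 0) := by
          intro i
          rw [hav]
          by_cases h1 : i = p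
          · have h2 : ¬ i = q := fun hh => hpq (h1 ▸ hh ▸ rfl)
            rw [if_pos (Or.inl h1), if_pos h1, if_neg h2, sq, hc2]
            norm_num
          · by_cases h2 : i = q
            · rw [if_pos (Or.inr h2), if_neg h1, if_pos h2, sq, hc2]
              norm_num
            · rw [if_neg (by tauto), if_neg h1, if_neg h2]
              norm_num
        rw [Finset.sum_congr rfl fun i _ => h1 i, Finset.sum_add_distrib,
          Finset.sum_ite_eq' univ p (fun _ => (1:ℝ)/2),
          Finset.sum_ite_eq' univ q (fun _ => (1:ℝ)/2)]
        simp
        norm_num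
      obtain ⟨C, hC0, hfr⟩ := (h a hna).2
      have hx : ⟪(EuclideanSpace.single r (1:ℝ)), a⟫ = 0 := by
        rw [inner_single_left', hav, if_neg (by
          rintro (hh | hh)
          · exact hpr hh.symm
          · exact hqr hh.symm)]
      have heq := congrFun (congrArg WithLp.ofLp (hfr _ hx)) s
      have hL : (EuclideanSpace.single r (1:ℝ)) s = 0 := by
        rw [EuclideanSpace.single_apply, if_neg (fun hh => hrs hh.symm)]
      have happ : (C⁻¹ • ∑ U ∈ A, ⟪(EuclideanSpace.single r (1:ℝ)), Uact n U a⟫ • Uact n U a) s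
          = C⁻¹ * ∑ U ∈ A, ⟪(EuclideanSpace.single r (1:ℝ)), Uact n U a⟫ * Uact n U a s := by
        show C⁻¹ * ((∑ U ∈ A, _ • Uact n U a) s) = _
        congr 1
        rw [WithLp.ofLp_sum, Finset.sum_apply]
        rfl
      rw [hL, happ] at heq
      have hsum0 : ∑ U ∈ A, ⟪(EuclideanSpace.single r (1:ℝ)), Uact n U a⟫ * Uact n U a s = 0 := by
        have := heq.symm
        rcases mul_eq_zero.mp this with hbad | hok
        · exact absurd hbad (inv_ne_zero (ne_of_gt hC0))
        · exact hok
      have hterm : ∀ U ∈ A, ⟪(EuclideanSpace.single r (1:ℝ)), Uact n U a⟫ * Uact n U a s =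
          (1/2) * (if (U.2 r = p ∧ U.2 s = q ∨ U.2 r = q ∧ U.2 s = p)
            then sg (U.1 p) * sg (U.1 q) else 0) := by
        intro U hU
        have hadm := hA U hU
        rw [inner_single_left', Uact_apply, Uact_apply, hav, hav]
        by_cases h1 : U.2 r = p <;> by_cases h2 : U.2 r = q <;>
          by_cases h3 : U.2 s = p <;> by_cases h4 : U.2 s = q
        all_goals first
          | exact absurd (h1.symm.trans h2) hpq
          | exact absurd (h3.symm.trans h4) hpq
          | exact absurd (k_inj hadm (h1.trans h3.symm)) hrs
          | exact absurd (k_inj hadm (h2.trans h4.symm)) hrs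
          | (simp only [h1, h2, h3, h4, hpq, Ne.symm hpq, true_or, or_true, true_and, and_true,
              false_or, or_false, false_and, and_false, if_true, if_false, eq_self_iff_true,
              not_true, not_false_iff, mul_zero, zero_mul, or_self, ite_true, ite_false]
             <;> try simp [hpq, Ne.symm hpq])
        all_goals try (linear_combination sg (U.1 p) * sg (U.1 q) * hc2)
        all_goals try (linear_combination sg (U.1 q) * sg (U.1 p) * hc2)
        all_goals try ring
      rw [Finset.sum_congr rfl hterm, ← Finset.mul_sum] at hsum0
      have hsum0' : ∑ U ∈ A, (if (U.2 r = p ∧ U.2 s = q ∨ U.2 r = q ∧ U.2 s = p)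
          then sg (U.1 p) * sg (U.1 q) else 0) = 0 := by
        rcases mul_eq_zero.mp hsum0 with hbad | hok
        · norm_num at hbad
        · exact hok
      rw [← Finset.sum_filter, sum_sg_card] at hsum0'
      have hcc := sub_eq_zero.mp hsum0'
      have hf1 : ((A.filter (fun U => U.2 r = p ∧ U.2 s = q ∨ U.2 r = q ∧ U.2 s = p)).filter
          (fun U => U.1 p * U.1 q = 1)) =
          A.filter (fun U => U.1 p * U.1 q = 1 ∧
            (U.2 r = p ∧ U.2 s = q ∨ U.2 r = q ∧ U.2 s = p)) := by
        rw [Finset.filter_filter]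
        exact Finset.filter_congr fun U _ => and_comm
      have hf2 : ((A.filter (fun U => U.2 r = p ∧ U.2 s = q ∨ U.2 r = q ∧ U.2 s = p)).filter
          (fun U => U.1 p * U.1 q = -1)) =
          A.filter (fun U => U.1 p * U.1 q = -1 ∧
            (U.2 r = p ∧ U.2 s = q ∨ U.2 r = q ∧ U.2 s = p)) := by
        rw [Finset.filter_filter]
        exact Finset.filter_congr fun U _ => and_comm
      rw [hf1, hf2] at hcc
      exact_mod_cast hcc.symm
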